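/- Let k ≥ 1 and ν > 0, and suppose there is a constant C_k > 0 such that for every real number α and every real N ≥ 1 there exists an integer n with 1 ≤ n ≤ N and ‖α n^k‖ ≤ C_k N^{−ν}. Then there is a constant C'_k > 0 such that for all real numbers α₁ and α_k and all sufficiently large N, there exists an integer n with 1 ≤ n ≤ N and ‖α_k n^k + α₁ n‖ ≤ C'_k N^{−ν/(2+ν)}. -/

import Mathlib

/-- Distance from a real number to the nearest integer. -/
noncomputable def nearestIntDist (x : ℝ) : ℝ := |x - round x|

lemma nearestIntDist_le_int (x : ℝ) (m : ℤ) : nearestIntDist x ≤ |x - m| :=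
  round_le x m

lemma nearestIntDist_add (x y : ℝ) :
    nearestIntDist (x + y) ≤ nearestIntDist x + nearestIntDist y := by
  calc nearestIntDist (x + y) ≤ |x + y - ((round x + round y : ℤ) : ℝ)| :=
        nearestIntDist_le_int _ _
    _ ≤ nearestIntDist x + nearestIntDist y := by
        push_cast
        unfold nearestIntDist
        have : x + y - ((round x : ℝ) + round y) = (x - round x) + (y - round y) := by ring
        rw [this]; exact abs_add_le _ _

lemma nearestIntDist_nat_mul (m : ℕ) (y : ℝ) :
    nearestIntDist ((m : ℝ) * y) ≤ (m : ℝ) * nearestIntDist y := by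
  calc nearestIntDist ((m : ℝ) * y) ≤ |(m : ℝ) * y - ((m * round y : ℤ) : ℝ)| :=
        nearestIntDist_le_int _ _
    _ = (m : ℝ) * nearestIntDist y := by
        push_cast
        rw [← mul_sub, abs_mul, abs_of_nonneg (by positivity : (0:ℝ) ≤ (m:ℝ))]
        rfl

/-- **Theorem 2(b) reduction step (Baker).** Let `k ≥ 1` and `ν > 0`. Suppose there is a
constant `C_k > 0` such that for every real `α` and every real `N ≥ 1` there is an
integer `1 ≤ n ≤ N` with `‖α n^k‖ ≤ C_k N^{−ν}`. Then there is a constant `C'_k > 0`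
such that for all real `α₁, α_k` and all sufficiently large `N` there is an integer
`1 ≤ n ≤ N` with `‖α_k n^k + α₁ n‖ ≤ C'_k N^{−ν/(2+ν)}`. -/
theorem monomial_to_binomial_small_fractional_parts (k : ℕ) (hk : 1 ≤ k)
    (ν : ℝ) (hν : 0 < ν) (Ck : ℝ) (hCk : 0 < Ck)
    (H : ∀ (α : ℝ) (N : ℝ), 1 ≤ N → ∃ n : ℕ, 1 ≤ n ∧ (n : ℝ) ≤ N ∧
      nearestIntDist (α * (n : ℝ) ^ k) ≤ Ck * N ^ (-ν)) :
    ∃ C' : ℝ, 0 < C' ∧ ∃ N₀ : ℝ, ∀ (α₁ αk : ℝ) (N : ℝ), N₀ ≤ N →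
      ∃ n : ℕ, 1 ≤ n ∧ (n : ℝ) ≤ N ∧
        nearestIntDist (αk * (n : ℝ) ^ k + α₁ * (n : ℝ)) ≤ C' * N ^ (-ν / (2 + ν)) := by
  have h2ν : (0:ℝ) < 2 + ν := by linarith
  refine ⟨Ck + 1, by linarith, 1, fun α₁ αk N hN => ?_⟩
  have hN0 : (0:ℝ) < N := by linarith
  set M : ℝ := N ^ ((1:ℝ) / (2 + ν)) with hM
  set Q : ℝ := N ^ ((1 + ν) / (2 + ν)) with hQ
  have hM1 : 1 ≤ M := Real.one_le_rpow hN (by positivity)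
  have hQ1 : 1 ≤ Q := Real.one_le_rpow hN (by positivity)
  -- Dirichlet on α₁ with denominator bound ⌊Q⌋
  set Qn : ℕ := ⌊Q⌋₊ with hQn
  have hQn1 : 1 ≤ Qn := Nat.one_le_iff_ne_zero.mpr (by
    simp [hQn, Nat.floor_eq_zero, not_lt, hQ1])
  obtain ⟨q, hq0, hqQn, hqD⟩ := Real.exists_nat_abs_mul_sub_round_le α₁ hQn1
  have hqQ : (q : ℝ) ≤ Q := le_trans (by exact_mod_cast hqQn) (Nat.floor_le (by linarith))
  have hQlt : Q < (Qn : ℝ) + 1 := Nat.lt_floor_add_one Q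
  -- apply H to αk * q^k with bound M
  obtain ⟨m, hm0, hmM, hmB⟩ := H (αk * (q : ℝ) ^ k) M hM1
  refine ⟨q * m, Nat.one_le_iff_ne_zero.mpr (by positivity), ?_, ?_⟩
  · have : ((q * m : ℕ) : ℝ) = (q : ℝ) * m := by push_cast; ring
    rw [this]
    calc (q : ℝ) * m ≤ Q * M := by
          apply mul_le_mul hqQ hmM (by positivity) (by linarith)
      _ = N := by
          rw [hQ, hM, ← Real.rpow_add hN0,
            show (1 + ν) / (2 + ν) + 1 / (2 + ν) = 1 by field_simp; ring]
          exact Real.rpow_one N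
  · have key : αk * ((q * m : ℕ) : ℝ) ^ k + α₁ * ((q * m : ℕ) : ℝ)
        = (αk * (q:ℝ)^k) * (m:ℝ)^k + (m:ℝ) * ((q:ℝ) * α₁) := by push_cast; ring
    rw [key]
    have hlin : nearestIntDist ((m:ℝ) * ((q:ℝ) * α₁)) ≤ (m : ℝ) * (1 / ((Qn:ℝ) + 1)) := by
      refine le_trans (nearestIntDist_nat_mul m _) ?_
      apply mul_le_mul_of_nonneg_left _ (by positivity)
      exact hqD
    have hMQ : (m : ℝ) * (1 / ((Qn:ℝ) + 1)) ≤ M / Q := by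
      rw [div_eq_mul_inv M Q]
      apply mul_le_mul hmM _ (by positivity) (by linarith)
      rw [one_div]
      exact inv_anti₀ (by linarith) hQlt.le
    have hMν : M ^ (-ν) = N ^ (-ν / (2 + ν)) := by
      rw [hM, ← Real.rpow_mul hN0.le]
      congr 1
      field_simp
    have hMQ2 : M / Q = N ^ (-ν / (2 + ν)) := by
      rw [hM, hQ, ← Real.rpow_sub hN0]
      congr 1
      field_simp
      ring
    calc nearestIntDist ((αk * (q:ℝ)^k) * (m:ℝ)^k + (m:ℝ) * ((q:ℝ) * α₁))
        ≤ nearestIntDist ((αk * (q:ℝ)^k) * (m:ℝ)^k)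
          + nearestIntDist ((m:ℝ) * ((q:ℝ) * α₁)) := nearestIntDist_add _ _
      _ ≤ Ck * M ^ (-ν) + M / Q := add_le_add hmB (hlin.trans hMQ)
      _ = (Ck + 1) * N ^ (-ν / (2 + ν)) := by rw [hMν, hMQ2]; ring
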